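/- Let a₁ > a₂ > ⋯ > aₙ be real numbers. Then the convex hull of the set of all permutations of the vector (a₁,…,aₙ) in ℝⁿ equals the set of points (x₁,…,xₙ) ∈ ℝⁿ such that x₁ + ⋯ + xₙ = a₁ + ⋯ + aₙ and x_{i₁} + ⋯ + x_{i_r} ≤ a₁ + ⋯ + a_r for all 1 ≤ i₁ < ⋯ < i_r ≤ n and 1 ≤ r ≤ n. -/

import Mathlib

open MeasureTheory Real Complex
open scoped FourierTransform ENNReal NNReal Classical
noncomputable section

open Finset

/-- Abel summation inequality with nonnegative antitone weights. -/
lemma abel_nonneg (y b : ℕ → ℝ) :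
    ∀ n : ℕ, ∀ d : ℕ → ℝ, (∀ i j, i ≤ j → j < n → d j ≤ d i) → (∀ i, i < n → 0 ≤ d i) →
    (∀ r, r ≤ n → ∑ i ∈ range r, y i ≤ ∑ i ∈ range r, b i) →
    ∑ i ∈ range n, d i * y i ≤ ∑ i ∈ range n, d i * b i := by
  intro n
  induction n with
  | zero => intro d _ _ _; simp
  | succ n ih =>
    intro d hanti hpos hpre
    have h1 : ∑ i ∈ range n, (d i - d n) * y i ≤ ∑ i ∈ range n, (d i - d n) * b i := by
      apply ih (fun i => d i - d n)
      · intro i j hij hj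
        have := hanti i j hij (hj.trans (Nat.lt_succ_self n)); linarith [this]
      · intro i hi
        have := hanti i n hi.le (Nat.lt_succ_self n); linarith [this]
      · intro r hr; exact hpre r (hr.trans (Nat.le_succ n))
    have h2 : d n * (∑ i ∈ range (n+1), y i) ≤ d n * (∑ i ∈ range (n+1), b i) :=
      mul_le_mul_of_nonneg_left (hpre (n+1) le_rfl) (hpos n (Nat.lt_succ_self n))
    have e1 : ∀ z : ℕ → ℝ, ∑ i ∈ range (n+1), d i * z i
        = ∑ i ∈ range n, (d i - d n) * z i + d n * ∑ i ∈ range (n+1), z i := by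
      intro z
      rw [Finset.sum_range_succ (fun i => d i * z i), Finset.sum_range_succ z, mul_add,
        Finset.mul_sum]
      have : ∑ i ∈ range n, (d i - d n) * z i
          = ∑ i ∈ range n, d i * z i - ∑ i ∈ range n, d n * z i := by
        rw [← Finset.sum_sub_distrib]
        exact Finset.sum_congr rfl fun i _ => by ring
      rw [this]; ring
    rw [e1 y, e1 b]
    exact add_le_add h1 h2

/-- Abel summation inequality with antitone weights, using equality of total sums. -/
lemma abel_eq (d y b : ℕ → ℝ) (n : ℕ)
    (hanti : ∀ i j, i ≤ j → j < n → d j ≤ d i)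
    (hpre : ∀ r, r ≤ n → ∑ i ∈ range r, y i ≤ ∑ i ∈ range r, b i)
    (heq : ∑ i ∈ range n, y i = ∑ i ∈ range n, b i) :
    ∑ i ∈ range n, d i * y i ≤ ∑ i ∈ range n, d i * b i := by
  rcases Nat.eq_zero_or_pos n with rfl | hn
  · simp
  set c := d (n - 1) with hc
  have h1 : ∑ i ∈ range n, (d i - c) * y i ≤ ∑ i ∈ range n, (d i - c) * b i := by
    apply abel_nonneg y b n (fun i => d i - c)
    · intro i j hij hj
      have := hanti i j hij hj; linarith [this]
    · intro i hi
      have := hanti i (n - 1) (Nat.le_sub_one_of_lt hi) (Nat.sub_lt hn one_pos)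
      linarith [this]
    · exact hpre
  have e1 : ∀ z : ℕ → ℝ, ∑ i ∈ range n, d i * z i
      = ∑ i ∈ range n, (d i - c) * z i + c * ∑ i ∈ range n, z i := by
    intro z
    rw [Finset.mul_sum, ← Finset.sum_add_distrib]
    exact Finset.sum_congr rfl fun i _ => by ring
  rw [e1 y, e1 b, heq]
  exact add_le_add h1 le_rfl

/-- The initial segment of `Fin n` as a mapped universe. -/
lemma filter_lt_eq_map (n r : ℕ) (hr : r ≤ n) :
    (Finset.univ.filter (fun j : Fin n => (j : ℕ) < r))
      = (Finset.univ : Finset (Fin r)).map (Fin.castLEOrderEmb hr).toEmbedding := by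
  ext j
  constructor
  · intro hj
    rw [Finset.mem_filter] at hj
    rw [Finset.mem_map]
    exact ⟨⟨j, hj.2⟩, Finset.mem_univ _, Fin.ext rfl⟩
  · intro hj
    rw [Finset.mem_map] at hj
    obtain ⟨k, -, rfl⟩ := hj
    rw [Finset.mem_filter]
    exact ⟨Finset.mem_univ _, k.isLt⟩

lemma card_filter_lt (n r : ℕ) (hr : r ≤ n) :
    (Finset.univ.filter (fun j : Fin n => (j : ℕ) < r)).card = r := by
  rw [filter_lt_eq_map n r hr, Finset.card_map, Finset.card_univ, Fintype.card_fin]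

/-- a sum of an antitone function over a finset is at most the sum over the initial segment
of the same cardinality. -/
lemma sum_le_initial (n : ℕ) (a : Fin n → ℝ) (ha : Antitone a) (T : Finset (Fin n)) :
    ∑ i ∈ T, a i ≤ ∑ i ∈ Finset.univ.filter (fun j : Fin n => (j : ℕ) < T.card), a i := by
  set r := T.card with hrdef
  have hr : r ≤ n := by
    simpa using (Finset.card_le_univ T)
  set e := T.orderIsoOfFin (rfl : T.card = r) with he
  have key : ∀ m : ℕ, ∀ k : Fin r, (k : ℕ) = m → (k : ℕ) ≤ ((e k : Fin n) : ℕ) := by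
    intro m
    induction m with
    | zero => intro k hk; rw [hk]; exact Nat.zero_le _
    | succ m ihm =>
      intro k hk
      have hkr := k.isLt
      have hm : m < r := by omega
      set k' : Fin r := ⟨m, hm⟩ with hk'
      have hk'v : (k' : ℕ) = m := rfl
      have hk'k : k' < k := by rw [Fin.lt_def]; omega
      have h1 := ihm k' rfl
      have h2 : (e k' : Fin n) < (e k : Fin n) := by
        have := e.strictMono hk'k
        exact_mod_cast this
      rw [Fin.lt_def] at h2
      simp only [hk'] at h1 h2
      omega
  have hsum1 : ∑ i ∈ T, a i = ∑ k : Fin r, a (e k : Fin n) := by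
    rw [← Finset.sum_coe_sort T a]
    exact (Equiv.sum_comp e.toEquiv (fun t : T => a (t : Fin n))).symm
  have hsum2 : ∑ i ∈ Finset.univ.filter (fun j : Fin n => (j : ℕ) < r), a i
      = ∑ k : Fin r, a (Fin.castLE hr k) := by
    rw [filter_lt_eq_map n r hr, Finset.sum_map]
    rfl
  rw [hsum1, hsum2]
  apply Finset.sum_le_sum
  intro k _
  apply ha
  rw [Fin.le_def]
  simpa using key (k : ℕ) k rfl

/-- Key separation-side inequality: against any linear functional, a point of the
majorization polytope is dominated by some permutation of `a`. -/
lemma key_ineq (n : ℕ) (a x : Fin n → ℝ)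
    (hsum : (∑ i, x i) = (∑ i, a i))
    (hineq : ∀ S : Finset (Fin n),
      ∑ i ∈ S, x i ≤ ∑ i ∈ Finset.univ.filter (fun j : Fin n => (j : ℕ) < S.card), a i)
    (c : Fin n → ℝ) :
    ∃ σ : Equiv.Perm (Fin n), ∑ i, x i * c i ≤ ∑ i, a (σ i) * c i := by
  set τ := Tuple.sort (fun i => -c i) with hτ
  have hmono : Monotone (fun i => -c (τ i)) := Tuple.monotone_sort (fun i => -c i)
  set D : ℕ → ℝ := fun i => if h : i < n then c (τ ⟨i, h⟩) else 0 with hD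
  set Y : ℕ → ℝ := fun i => if h : i < n then x (τ ⟨i, h⟩) else 0 with hY
  set B : ℕ → ℝ := fun i => if h : i < n then a ⟨i, h⟩ else 0 with hB
  have hpre : ∀ r, r ≤ n → ∑ i ∈ range r, Y i ≤ ∑ i ∈ range r, B i := by
    intro r hr
    have hY' : ∑ i ∈ range r, Y i = ∑ k : Fin r, x (τ (Fin.castLE hr k)) := by
      rw [← Fin.sum_univ_eq_sum_range Y r]
      apply Finset.sum_congr rfl
      intro k _
      have hk : (k : ℕ) < n := lt_of_lt_of_le k.isLt hr
      simp only [hY, dif_pos hk]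
      rfl
    have hB' : ∑ i ∈ range r, B i
        = ∑ i ∈ Finset.univ.filter (fun j : Fin n => (j : ℕ) < r), a i := by
      rw [filter_lt_eq_map n r hr, Finset.sum_map, ← Fin.sum_univ_eq_sum_range B r]
      apply Finset.sum_congr rfl
      intro k _
      have hk : (k : ℕ) < n := lt_of_lt_of_le k.isLt hr
      simp only [hB, dif_pos hk]
      rfl
    set S : Finset (Fin n) :=
      ((Finset.univ : Finset (Fin r)).map (Fin.castLEOrderEmb hr).toEmbedding).image τ with hS
    have hcard : S.card = r := by
      rw [hS, Finset.card_image_of_injective _ τ.injective, Finset.card_map,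
        Finset.card_univ, Fintype.card_fin]
    have hxS : ∑ i ∈ S, x i = ∑ k : Fin r, x (τ (Fin.castLE hr k)) := by
      rw [hS, Finset.sum_image (fun u _ v _ h => τ.injective h), Finset.sum_map]
      rfl
    have := hineq S
    rw [hcard] at this
    rw [hY', hB', ← hxS]
    exact this
  have heq : ∑ i ∈ range n, Y i = ∑ i ∈ range n, B i := by
    have h1 : ∑ i ∈ range n, Y i = ∑ i : Fin n, x (τ i) := by
      rw [← Fin.sum_univ_eq_sum_range Y n]
      apply Finset.sum_congr rfl
      intro k _
      simp only [hY, dif_pos k.isLt]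
    have h2 : ∑ i ∈ range n, B i = ∑ i : Fin n, a i := by
      rw [← Fin.sum_univ_eq_sum_range B n]
      apply Finset.sum_congr rfl
      intro k _
      simp only [hB, dif_pos k.isLt]
    rw [h1, h2, Equiv.sum_comp τ x, hsum]
  have hanti : ∀ i j, i ≤ j → j < n → D j ≤ D i := by
    intro i j hij hj
    have hi : i < n := lt_of_le_of_lt hij hj
    simp only [hD, dif_pos hi, dif_pos hj]
    have := hmono (show (⟨i, hi⟩ : Fin n) ≤ ⟨j, hj⟩ from hij)
    simpa using this
  have habel := abel_eq D Y B n hanti hpre heq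
  refine ⟨τ⁻¹, ?_⟩
  have hL : ∑ i, x i * c i = ∑ i ∈ range n, D i * Y i := by
    rw [← Fin.sum_univ_eq_sum_range (fun i => D i * Y i) n,
      ← Equiv.sum_comp τ (fun i => x i * c i)]
    apply Finset.sum_congr rfl
    intro k _
    simp only [hD, hY, dif_pos k.isLt]
    ring
  have hR : ∑ i, a ((τ⁻¹ : Equiv.Perm (Fin n)) i) * c i = ∑ i ∈ range n, D i * B i := by
    rw [← Fin.sum_univ_eq_sum_range (fun i => D i * B i) n,
      ← Equiv.sum_comp τ (fun i => a ((τ⁻¹ : Equiv.Perm (Fin n)) i) * c i)]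
    apply Finset.sum_congr rfl
    intro k _
    simp only [hD, hB, dif_pos k.isLt, Equiv.Perm.inv_def, Equiv.symm_apply_apply]
    ring
  rw [hL, hR]
  exact habel

/-- Lemma 2.4 on permutahedra: the convex hull of the permutations of a strictly
decreasing vector `(a₁,…,aₙ)` is the set of `x` with total sum `∑ aᵢ` and all partial sums
over `r` distinct indices at most `a₁ + ⋯ + a_r`. -/
theorem statement3 (n : ℕ) (a : Fin n → ℝ) (ha : StrictAnti a) :
    convexHull ℝ {x : Fin n → ℝ | ∃ σ : Equiv.Perm (Fin n), x = a ∘ σ} =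
      {x : Fin n → ℝ | (∑ i, x i) = (∑ i, a i) ∧
        ∀ S : Finset (Fin n),
          ∑ i ∈ S, x i ≤ ∑ i ∈ Finset.univ.filter (fun j : Fin n => (j : ℕ) < S.card), a i} := by
  set G : Set (Fin n → ℝ) := {x : Fin n → ℝ | ∃ σ : Equiv.Perm (Fin n), x = a ∘ σ} with hG
  set P : Set (Fin n → ℝ) := {x : Fin n → ℝ | (∑ i, x i) = (∑ i, a i) ∧
        ∀ S : Finset (Fin n),
          ∑ i ∈ S, x i ≤ ∑ i ∈ Finset.univ.filter (fun j : Fin n => (j : ℕ) < S.card), a i}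
    with hP
  have hGP : G ⊆ P := by
    rintro x ⟨σ, rfl⟩
    constructor
    · exact Equiv.sum_comp σ a
    · intro S
      have h1 : ∑ i ∈ S, (a ∘ σ) i = ∑ j ∈ S.image σ, a j := by
        rw [Finset.sum_image (fun u _ v _ h => σ.injective h)]
        rfl
      have h2 : (S.image σ).card = S.card :=
        Finset.card_image_of_injective _ σ.injective
      calc ∑ i ∈ S, (a ∘ σ) i = ∑ j ∈ S.image σ, a j := h1
        _ ≤ ∑ i ∈ Finset.univ.filter (fun j : Fin n => (j : ℕ) < (S.image σ).card), a i :=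
            sum_le_initial n a ha.antitone _
        _ = ∑ i ∈ Finset.univ.filter (fun j : Fin n => (j : ℕ) < S.card), a i := by rw [h2]
  have hPconv : Convex ℝ P := by
    intro u hu v hv s t hs ht hst
    constructor
    · have : ∑ i, (s • u + t • v) i = s * ∑ i, u i + t * ∑ i, v i := by
        simp [Finset.mul_sum, Finset.sum_add_distrib]
      rw [this, hu.1, hv.1]
      have : (s + t) * ∑ i, a i = ∑ i, a i := by rw [hst, one_mul]
      linarith [this]
    · intro S
      have h1 : ∑ i ∈ S, (s • u + t • v) i = s * ∑ i ∈ S, u i + t * ∑ i ∈ S, v i := by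
        simp [Finset.mul_sum, Finset.sum_add_distrib]
      rw [h1]
      have h2 := hu.2 S
      have h3 := hv.2 S
      set C := ∑ i ∈ Finset.univ.filter (fun j : Fin n => (j : ℕ) < S.card), a i with hCdef
      calc s * ∑ i ∈ S, u i + t * ∑ i ∈ S, v i
          ≤ s * C + t * C := by
            exact add_le_add (mul_le_mul_of_nonneg_left h2 hs)
              (mul_le_mul_of_nonneg_left h3 ht)
        _ = (s + t) * C := by ring
        _ = C := by rw [hst, one_mul]
  ext x
  constructor
  · intro hx
    exact convexHull_min hGP hPconv hx
  · intro hx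
    by_contra hxh
    have hGfin : G.Finite := by
      have : G = Set.range (fun σ : Equiv.Perm (Fin n) => a ∘ σ) := by
        ext y; simp [hG, Set.mem_setOf_eq, eq_comm]
      rw [this]
      exact Set.finite_range _
    have hclosed : IsClosed (convexHull ℝ G) := hGfin.isClosed_convexHull ℝ
    obtain ⟨f, u, hfu, hux⟩ :=
      geometric_hahn_banach_closed_point (convex_convexHull ℝ G) hclosed hxh
    set c : Fin n → ℝ := fun i => f (fun j => if i = j then (1 : ℝ) else 0) with hc
    have hf : ∀ y : Fin n → ℝ, f y = ∑ i, y i * c i := by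
      intro y
      have hy := pi_eq_sum_univ y
      calc f y = f (∑ i, y i • fun j => if i = j then (1:ℝ) else 0) := by rw [← hy]
        _ = ∑ i, y i * c i := by
          rw [map_sum]
          apply Finset.sum_congr rfl
          intro i _
          rw [f.map_smul]
          rfl
    obtain ⟨σ, hσ⟩ := key_ineq n a x hx.1 hx.2 c
    have h1 : f x ≤ f (a ∘ σ) := by
      rw [hf x, hf (a ∘ σ)]
      exact hσ
    have h2 : f (a ∘ σ) < u := hfu _ (subset_convexHull ℝ G ⟨σ, rfl⟩)
    linarith [h1, h2, hux]
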